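/- Let P₀ and P₁ be two Borel probability measures on ℝ^m. If the sigmoid IPM d_sig(P₀,P₁) = 0, then for every bounded measurable function g : ℝ^m → ℝ one has ∫ g dP₀ = ∫ g dP₁; in particular, for any prediction model f and any function φ : ℝ → ℝ with φ∘f bounded measurable, the φ-fairness |∫ φ(f(z)) dP₀(z) − ∫ φ(f(z)) dP₁(z)| equals 0. -/

import Mathlib

open MeasureTheory

/-- The sigmoid function `σ(t) = 1/(1 + e^{-t})`. -/
noncomputable def sigmoid (t : ℝ) : ℝ := 1 / (1 + Real.exp (-t))

/-- The sigmoid IPM between two measures on `ℝ^m`. -/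
noncomputable def sigmoidIPM {m : ℕ} (P₀ P₁ : Measure (Fin m → ℝ)) : ℝ :=
  ⨆ p : (Fin m → ℝ) × ℝ,
    |(∫ z, sigmoid ((∑ i, p.1 i * z i) + p.2) ∂P₀) -
      ∫ z, sigmoid ((∑ i, p.1 i * z i) + p.2) ∂P₁|

section Aux
open Filter Set Topology FourierTransform RealInnerProductSpace SchwartzMap Metric Manifold
lemma sigmoid_pos (t : ℝ) : 0 < sigmoid t := by unfold sigmoid; positivity
lemma sigmoid_le_one (t : ℝ) : sigmoid t ≤ 1 := by
  unfold sigmoid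
  rw [div_le_one (by positivity)]
  nlinarith [Real.exp_pos (-t)]
lemma sigmoid_continuous : Continuous sigmoid := by
  unfold sigmoid
  exact continuous_const.div (by continuity) (fun t => by positivity)
lemma sigmoid_integrable {ν : Measure ℝ} [IsFiniteMeasure ν] (g : ℝ → ℝ) (hg : Measurable g) :
    Integrable (fun x => sigmoid (g x)) ν := by
  apply Integrable.mono' (integrable_const 1)
  · exact (sigmoid_continuous.measurable.comp hg).aestronglyMeasurable
  · filter_upwards with x
    rw [Real.norm_eq_abs, abs_of_pos (sigmoid_pos _)]
    exact sigmoid_le_one _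

lemma tendsto_sigmoid_atTop : Tendsto sigmoid atTop (𝓝 1) := by
  have h : Tendsto (fun t : ℝ => 1 + Real.exp (-t)) atTop (𝓝 1) := by
    have : Tendsto (fun t : ℝ => Real.exp (-t)) atTop (𝓝 0) :=
      Real.tendsto_exp_atBot.comp tendsto_neg_atTop_atBot
    simpa using tendsto_const_nhds.add this
  have := (tendsto_const_nhds (α := ℝ) (x := (1:ℝ))).div h one_ne_zero
  rw [div_one] at this
  exact this

lemma tendsto_sigmoid_atBot : Tendsto sigmoid atBot (𝓝 0) := by
  have h : Tendsto (fun t : ℝ => 1 + Real.exp (-t)) atBot atTop := by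
    apply tendsto_atTop_add_const_left
    exact Real.tendsto_exp_atTop.comp tendsto_neg_atBot_atTop
  have h2 := h.inv_tendsto_atTop
  have : sigmoid = fun t : ℝ => ((fun t : ℝ => 1 + Real.exp (-t))⁻¹) t := by
    funext t; simp [sigmoid, one_div]
  rw [this]
  exact h2

/-- Key 1D pointwise limit. -/
lemma sigmoid_ptlim (t x : ℝ) :
    Tendsto (fun n : ℕ => sigmoid (n * (x - t)))
      atTop (𝓝 ((Ioi t).indicator (fun _ => (1:ℝ)) x + ({t} : Set ℝ).indicator (fun _ => (1/2:ℝ)) x)) := by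
  rcases lt_trichotomy t x with hlt | heq | hgt
  · have h1 : Tendsto (fun n : ℕ => (n : ℝ) * (x - t)) atTop atTop :=
      Tendsto.atTop_mul_const (by linarith) tendsto_natCast_atTop_atTop
    have := tendsto_sigmoid_atTop.comp h1
    simpa [indicator_of_mem, hlt, Set.mem_Ioi, Set.mem_singleton_iff, (ne_of_gt hlt).symm,
      indicator_of_notMem, ne_of_gt hlt, Function.comp_def] using this
  · subst heq
    have h0 : ∀ n : ℕ, sigmoid (↑n * (t - t)) = 1/2 := by
      intro n; norm_num [sigmoid]
    simp only [h0]
    simp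
  · have h1 : Tendsto (fun n : ℕ => (n : ℝ) * (x - t)) atTop atBot :=
      Tendsto.atTop_mul_const_of_neg (by linarith) tendsto_natCast_atTop_atTop
    have := tendsto_sigmoid_atBot.comp h1
    simpa [indicator_of_notMem, Set.mem_Ioi, not_lt.mpr (le_of_lt hgt),
      Set.mem_singleton_iff, ne_of_lt hgt, Function.comp_def] using this

lemma oneD_G (ν : Measure ℝ) [IsProbabilityMeasure ν] (t : ℝ) :
    Tendsto (fun n : ℕ => ∫ x, sigmoid (n * (x - t)) ∂ν) atTop
      (𝓝 ((ν (Ioi t)).toReal + (ν {t}).toReal / 2)) := by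
  have key := tendsto_integral_of_dominated_convergence (μ := ν)
      (F := fun n : ℕ => fun x => sigmoid (n * (x - t)))
      (f := fun x => (Ioi t).indicator (fun _ => (1:ℝ)) x + ({t} : Set ℝ).indicator (fun _ => (1/2:ℝ)) x)
      (bound := fun _ => 1)
      (fun n => (sigmoid_integrable _ (by fun_prop)).aestronglyMeasurable)
      (integrable_const 1)
      (fun n => by
        filter_upwards with x
        rw [Real.norm_eq_abs, abs_of_pos (sigmoid_pos _)]
        exact sigmoid_le_one _)
      (by filter_upwards with x using sigmoid_ptlim t x)
  have heval : (∫ x, ((Ioi t).indicator (fun _ => (1:ℝ)) x + ({t} : Set ℝ).indicator (fun _ => (1/2:ℝ)) x) ∂ν)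
      = (ν (Ioi t)).toReal + (ν {t}).toReal / 2 := by
    rw [integral_add ((integrable_indicator_iff measurableSet_Ioi).mpr (integrable_const (1:ℝ)).integrableOn)
        ((integrable_indicator_iff (measurableSet_singleton t)).mpr (integrable_const _).integrableOn),
      integral_indicator_const _ measurableSet_Ioi,
      integral_indicator_const _ (measurableSet_singleton t)]
    simp [smul_eq_mul, measureReal_def]; ring
  rw [heval] at key
  exact key

lemma oneD_ext (ν₀ ν₁ : Measure ℝ) [IsProbabilityMeasure ν₀] [IsProbabilityMeasure ν₁]
    (h : ∀ c b : ℝ, (∫ x, sigmoid (c * x + b) ∂ν₀) = ∫ x, sigmoid (c * x + b) ∂ν₁) :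
    ν₀ = ν₁ := by
  -- G equality
  have hG : ∀ t : ℝ, (ν₀ (Ioi t)).toReal + (ν₀ {t}).toReal / 2
      = (ν₁ (Ioi t)).toReal + (ν₁ {t}).toReal / 2 := by
    intro t
    refine tendsto_nhds_unique ?_ (oneD_G ν₁ t)
    have hcong : ∀ (ν : Measure ℝ) (n : ℕ), (∫ x, sigmoid (n * (x - t)) ∂ν)
        = ∫ x, sigmoid (n * x + (-(n * t))) ∂ν := by
      intro ν n
      congr 1; funext x; ring_nf
    have := oneD_G ν₀ t
    simp_rw [hcong ν₀] at this
    simp_rw [h, ← hcong ν₁] at this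
    exact this
  -- Ioi equality
  have hIoi : ∀ t : ℝ, ν₀ (Ioi t) = ν₁ (Ioi t) := by
    intro t
    set s : ℕ → ℝ := fun k => t + 1/(k+1) with hs
    have hanti : StrictAnti s := by
      intro i j hij
      have : (1:ℝ)/(j+1) < 1/(i+1) := by
        apply one_div_lt_one_div_of_lt <;> [positivity; exact_mod_cast by omega]
      simpa [hs] using this
    have hmono : Monotone (fun k => Ioi (s k)) := by
      intro i j hij
      exact Ioi_subset_Ioi (hanti.antitone hij)
    have hun : (⋃ k, Ioi (s k)) = Ioi t := by
      ext x
      simp only [mem_iUnion, mem_Ioi]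
      constructor
      · rintro ⟨k, hk⟩
        have : t < s k := by simp [hs]; positivity
        linarith
      · intro hx
        obtain ⟨k, hk⟩ := exists_nat_one_div_lt (show (0:ℝ) < x - t by linarith)
        exact ⟨k, by simp only [hs]; linarith⟩
    have hA : ∀ (ν : Measure ℝ) [IsProbabilityMeasure ν],
        Tendsto (fun k => (ν (Ioi (s k))).toReal) atTop (𝓝 (ν (Ioi t)).toReal) := by
      intro ν _
      have h1 := tendsto_measure_iUnion_atTop (μ := ν) hmono
      rw [hun] at h1
      exact (ENNReal.tendsto_toReal (measure_ne_top _ _)).comp h1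
    have hB : ∀ (ν : Measure ℝ) [IsProbabilityMeasure ν],
        Tendsto (fun k => (ν {s k}).toReal) atTop (𝓝 0) := by
      intro ν _
      have hdisj : Pairwise (Function.onFun Disjoint (fun k => ({s k} : Set ℝ))) := by
        intro i j hij
        simp only [Function.onFun, Set.disjoint_singleton]
        exact fun hcon => hij (hanti.injective hcon)
      have htsum : (∑' k, ν {s k}) ≠ ⊤ := by
        rw [← measure_iUnion hdisj (fun k => measurableSet_singleton _)]
        exact measure_ne_top _ _
      have h0 := ENNReal.tendsto_atTop_zero_of_tsum_ne_top htsum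
      simpa [Function.comp_def] using (ENNReal.tendsto_toReal (by simp)).comp h0
    have lim0 : Tendsto (fun k => (ν₀ (Ioi (s k))).toReal + (ν₀ {s k}).toReal / 2) atTop
        (𝓝 ((ν₀ (Ioi t)).toReal)) := by
      simpa using (hA ν₀).add ((hB ν₀).div_const 2)
    have lim1 : Tendsto (fun k => (ν₀ (Ioi (s k))).toReal + (ν₀ {s k}).toReal / 2) atTop
        (𝓝 ((ν₁ (Ioi t)).toReal)) := by
      simp_rw [fun k => hG (s k)]
      simpa using (hA ν₁).add ((hB ν₁).div_const 2)
    have := tendsto_nhds_unique lim0 lim1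
    exact (ENNReal.toReal_eq_toReal_iff' (measure_ne_top _ _) (measure_ne_top _ _)).mp this
  refine Measure.ext_of_Iic ν₀ ν₁ (fun a => ?_)
  have h0 : ν₀ (Iic a) = ν₀ univ - ν₀ (Ioi a) := by
    rw [← compl_Ioi (a := a), measure_compl measurableSet_Ioi (measure_ne_top _ _)]
  have h1 : ν₁ (Iic a) = ν₁ univ - ν₁ (Ioi a) := by
    rw [← compl_Ioi (a := a), measure_compl measurableSet_Ioi (measure_ne_top _ _)]
  rw [h0, h1, hIoi a, measure_univ, measure_univ]


/-- A smooth compactly supported function as a Schwartz map. -/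
noncomputable def csToSchwartz {E F : Type*} [NormedAddCommGroup E] [NormedSpace ℝ E]
    [NormedAddCommGroup F] [NormedSpace ℝ F]
    (g : E → F) (hg : ContDiff ℝ ((⊤ : ℕ∞) : WithTop ℕ∞) g) (hsupp : HasCompactSupport g) : SchwartzMap E F where
  toFun := g
  smooth' := hg
  decay' := by
    intro k n
    have hs : HasCompactSupport (iteratedFDeriv ℝ n g) := hsupp.iteratedFDeriv n
    obtain ⟨C, hC⟩ := hs.exists_bound_of_continuous (hg.continuous_iteratedFDeriv (mod_cast le_top))
    obtain ⟨R, hR0, hR⟩ : ∃ R : ℝ, 0 ≤ R ∧ tsupport (iteratedFDeriv ℝ n g) ⊆ Metric.closedBall 0 R := by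
      obtain ⟨R, hR⟩ := hs.isBounded.subset_closedBall 0
      exact ⟨max R 0, le_max_right _ _, hR.trans (Metric.closedBall_subset_closedBall (le_max_left _ _))⟩
    refine ⟨max (R ^ k * C) 0, fun x => ?_⟩
    by_cases hx : x ∈ tsupport (iteratedFDeriv ℝ n g)
    · have h1 : ‖x‖ ≤ R := by simpa using Metric.mem_closedBall.mp (hR hx)
      have h2 : ‖iteratedFDeriv ℝ n g x‖ ≤ C := hC x
      refine le_trans ?_ (le_max_left _ _)
      have : ‖x‖ ^ k ≤ R ^ k := pow_le_pow_left₀ (norm_nonneg _) h1 k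
      exact mul_le_mul this h2 (norm_nonneg _) (by positivity)
    · have : iteratedFDeriv ℝ n g x = 0 := image_eq_zero_of_notMem_tsupport hx
      simp [this]

@[simp] lemma csToSchwartz_apply {E F : Type*} [NormedAddCommGroup E] [NormedSpace ℝ E]
    [NormedAddCommGroup F] [NormedSpace ℝ F]
    (g : E → F) (hg : ContDiff ℝ ((⊤ : ℕ∞) : WithTop ℕ∞) g) (hsupp : HasCompactSupport g) (x : E) :
    csToSchwartz g hg hsupp x = g x := rfl


variable {m : ℕ}
local notation "Vm" => EuclideanSpace ℝ (Fin m)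

lemma schwartz_integral_eq (Q₀ Q₁ : Measure (EuclideanSpace ℝ (Fin m)))
    [IsProbabilityMeasure Q₀] [IsProbabilityMeasure Q₁]
    (h : ∀ x : Vm, VectorFourier.fourierIntegral 𝐞 Q₀ (innerₗ Vm).flip (fun _ => (1:ℂ)) x
      = VectorFourier.fourierIntegral 𝐞 Q₁ (innerₗ Vm).flip (fun _ => (1:ℂ)) x)
    (f : SchwartzMap Vm ℂ) : (∫ x, f x ∂Q₀) = ∫ x, f x ∂Q₁ := by
  set g := (FourierTransform.fourierCLE ℂ (SchwartzMap Vm ℂ)).symm f with hgdef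
  have hg : ∀ ξ, 𝓕 (g : Vm → ℂ) ξ = f ξ := by
    intro ξ
    have h2 := (FourierTransform.fourierCLE ℂ (SchwartzMap Vm ℂ)).apply_symm_apply f
    conv_rhs => rw [← h2]
    rw [FourierTransform.fourierCLE_apply, SchwartzMap.fourier_coe]
  have hgint : Integrable (g : Vm → ℂ) volume := g.integrable
  have key : ∀ (Q : Measure Vm), IsProbabilityMeasure Q →
      (∫ ξ, f ξ ∂Q) = ∫ x, (g x) * (VectorFourier.fourierIntegral 𝐞 Q (innerₗ Vm).flip
        (fun _ => (1:ℂ)) x) ∂volume := by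
    intro Q hQ
    have := VectorFourier.integral_fourierIntegral_smul_eq_flip (L := innerₗ Vm)
      (μ := volume) (ν := Q) Real.continuous_fourierChar continuous_inner hgint
      (integrable_const (1:ℂ))
    simp only [smul_eq_mul, mul_one] at this
    rw [← this]
    congr 1
    funext ξ
    rw [← hg ξ]
    rfl
  rw [key Q₀ ‹_›, key Q₁ ‹_›]
  congr 1
  funext x
  rw [h x]


variable {m : ℕ}

lemma smoothcs_sandwich {K : Set (EuclideanSpace ℝ (Fin m))} (hK : IsCompact K)
    {δ : ℝ} (hδ : 0 < δ) :
    ∃ f : EuclideanSpace ℝ (Fin m) → ℝ, ContDiff ℝ ((⊤ : ℕ∞) : WithTop ℕ∞) f ∧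
      HasCompactSupport f ∧ (∀ x ∈ K, f x = 1) ∧ (∀ x, f x ∈ Icc (0:ℝ) 1) ∧
      (∀ x, x ∉ thickening δ K → f x = 0) := by
  obtain ⟨f, hf0, hf1, hf01⟩ := exists_contMDiffMap_zero_one_of_isClosed (n := ((⊤ : ℕ∞)))
    (𝓘(ℝ, EuclideanSpace ℝ (Fin m)))
    (isOpen_thickening (δ := δ) (E := K)).isClosed_compl hK.isClosed
    (by
      rw [Set.disjoint_compl_left_iff_subset]
      exact self_subset_thickening hδ K)
  have hfsmooth : ContDiff ℝ ((⊤ : ℕ∞) : WithTop ℕ∞) (f : EuclideanSpace ℝ (Fin m) → ℝ) := by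
    have := f.contMDiff
    rw [contMDiff_iff_contDiff] at this
    exact_mod_cast this
  have h1 : Function.support (f : EuclideanSpace ℝ (Fin m) → ℝ) ⊆ thickening δ K := by
    intro x hx
    by_contra hmem
    exact hx (hf0 hmem)
  have h2 : Bornology.IsBounded (tsupport (f : EuclideanSpace ℝ (Fin m) → ℝ)) :=
    (hK.isBounded.thickening.closure).subset (closure_mono h1)
  have hsupp : HasCompactSupport (f : EuclideanSpace ℝ (Fin m) → ℝ) :=
    Metric.isCompact_of_isClosed_isBounded (isClosed_tsupport _) h2
  refine ⟨f, hfsmooth, hsupp, fun x hx => ?_, hf01, fun x hx => ?_⟩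
  · exact hf1 hx
  · exact hf0 hx

lemma measure_compact_eq_aux (Q₀ Q₁ : Measure (EuclideanSpace ℝ (Fin m)))
    [IsProbabilityMeasure Q₀] [IsProbabilityMeasure Q₁]
    (h : ∀ g : EuclideanSpace ℝ (Fin m) → ℝ, ContDiff ℝ ((⊤ : ℕ∞) : WithTop ℕ∞) g →
      HasCompactSupport g → (∫ x, g x ∂Q₀) = ∫ x, g x ∂Q₁)
    {K : Set (EuclideanSpace ℝ (Fin m))} (hK : IsCompact K) : Q₀ K = Q₁ K := by
  have main : ∀ δ : ℝ, 0 < δ → ∀ ν₀ ν₁ : Measure (EuclideanSpace ℝ (Fin m)),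
      IsProbabilityMeasure ν₀ → IsProbabilityMeasure ν₁ →
      (∀ g : EuclideanSpace ℝ (Fin m) → ℝ, ContDiff ℝ ((⊤ : ℕ∞) : WithTop ℕ∞) g →
        HasCompactSupport g → (∫ x, g x ∂ν₀) = ∫ x, g x ∂ν₁) →
      (ν₀ K).toReal ≤ (ν₁ (thickening δ K)).toReal := by
    intro δ hδ ν₀ ν₁ hν₀ hν₁ hint
    obtain ⟨f, hsm, hcs, hone, h01, hout⟩ := smoothcs_sandwich hK hδ
    have hfint : ∀ (ν : Measure (EuclideanSpace ℝ (Fin m))), IsProbabilityMeasure ν →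
        Integrable f ν := by
      intro ν hν
      apply Integrable.mono' (integrable_const 1)
      · exact hsm.continuous.aestronglyMeasurable
      · filter_upwards with x
        rw [Real.norm_eq_abs, abs_of_nonneg (h01 x).1]
        exact (h01 x).2
    have low : (ν₀ K).toReal ≤ ∫ x, f x ∂ν₀ := by
      have : (ν₀ K).toReal = ∫ x, K.indicator (fun _ => (1:ℝ)) x ∂ν₀ := by
        rw [integral_indicator_const _ hK.isClosed.measurableSet]; simp [measureReal_def]
      rw [this]
      apply integral_mono ((integrable_indicator_iff hK.isClosed.measurableSet).mpr
        (integrable_const _).integrableOn) (hfint ν₀ hν₀)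
      intro x
      by_cases hx : x ∈ K
      · simp [indicator_of_mem hx, hone x hx]
      · simp only [indicator_of_notMem hx]
        exact (h01 x).1
    have high : (∫ x, f x ∂ν₁) ≤ (ν₁ (thickening δ K)).toReal := by
      have : (ν₁ (thickening δ K)).toReal
          = ∫ x, (thickening δ K).indicator (fun _ => (1:ℝ)) x ∂ν₁ := by
        rw [integral_indicator_const _ isOpen_thickening.measurableSet]; simp [measureReal_def]
      rw [this]
      apply integral_mono (hfint ν₁ hν₁) ((integrable_indicator_iff
        isOpen_thickening.measurableSet).mpr (integrable_const _).integrableOn)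
      intro x
      by_cases hx : x ∈ thickening δ K
      · simp only [indicator_of_mem hx]
        exact (h01 x).2
      · simp [indicator_of_notMem hx, hout x hx]
    calc (ν₀ K).toReal ≤ ∫ x, f x ∂ν₀ := low
      _ = ∫ x, f x ∂ν₁ := hint f hsm hcs
      _ ≤ (ν₁ (thickening δ K)).toReal := high
  -- pass to the limit δ → 0
  have hthick : ∀ (ν : Measure (EuclideanSpace ℝ (Fin m))), IsProbabilityMeasure ν →
      Tendsto (fun n : ℕ => (ν (thickening (1/(n+1)) K)).toReal) atTop (𝓝 (ν K).toReal) := by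
    intro ν hν
    have h1 : Tendsto (fun r => ν (thickening r K)) (𝓝[>] 0) (𝓝 (ν K)) :=
      tendsto_measure_thickening_of_isClosed ⟨1, one_pos, measure_ne_top _ _⟩ hK.isClosed
    have h2 : Tendsto (fun n : ℕ => (1:ℝ)/(n+1)) atTop (𝓝[>] (0:ℝ)) := by
      rw [tendsto_nhdsWithin_iff]
      constructor
      · exact tendsto_one_div_add_atTop_nhds_zero_nat
      · filter_upwards with n
        simp only [Set.mem_Ioi]
        positivity
    exact (ENNReal.tendsto_toReal (measure_ne_top _ _)).comp (h1.comp h2)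
  have le1 : (Q₀ K).toReal ≤ (Q₁ K).toReal := by
    apply ge_of_tendsto (hthick Q₁ ‹_›)
    filter_upwards with n
    exact main _ (by positivity) Q₀ Q₁ ‹_› ‹_› h
  have le2 : (Q₁ K).toReal ≤ (Q₀ K).toReal := by
    apply ge_of_tendsto (hthick Q₀ ‹_›)
    filter_upwards with n
    exact main _ (by positivity) Q₁ Q₀ ‹_› ‹_› (fun g hg hs => (h g hg hs).symm)
  exact (ENNReal.toReal_eq_toReal_iff' (measure_ne_top _ _) (measure_ne_top _ _)).mp
    (le_antisymm le1 le2)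


variable {m : ℕ}

lemma measure_eq_of_schwartz (Q₀ Q₁ : Measure (EuclideanSpace ℝ (Fin m)))
    [IsProbabilityMeasure Q₀] [IsProbabilityMeasure Q₁]
    (h : ∀ f : SchwartzMap (EuclideanSpace ℝ (Fin m)) ℂ, (∫ x, f x ∂Q₀) = ∫ x, f x ∂Q₁) :
    Q₀ = Q₁ := by
  have hreal : ∀ g : EuclideanSpace ℝ (Fin m) → ℝ, ContDiff ℝ ((⊤ : ℕ∞) : WithTop ℕ∞) g →
      HasCompactSupport g → (∫ x, g x ∂Q₀) = ∫ x, g x ∂Q₁ := by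
    intro g hg hcs
    have hgC : ContDiff ℝ ((⊤ : ℕ∞) : WithTop ℕ∞) (fun x => (g x : ℂ)) :=
      Complex.ofRealCLM.contDiff.comp hg
    have hcsC : HasCompactSupport (fun x => (g x : ℂ)) :=
      hcs.comp_left (g := Complex.ofReal) Complex.ofReal_zero
    have := h (csToSchwartz _ hgC hcsC)
    simp only [csToSchwartz_apply] at this
    have h0 : ∀ ν : Measure (EuclideanSpace ℝ (Fin m)),
        ∫ x, ((g x : ℝ) : ℂ) ∂ν = ((∫ x, g x ∂ν : ℝ) : ℂ) := fun ν => integral_ofReal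
    rw [h0, h0] at this
    exact_mod_cast this
  have hcompact : ∀ K : Set (EuclideanSpace ℝ (Fin m)), IsCompact K → Q₀ K = Q₁ K :=
    fun K hK => measure_compact_eq_aux Q₀ Q₁ hreal hK
  have hclosed : ∀ F : Set (EuclideanSpace ℝ (Fin m)), IsClosed F → Q₀ F = Q₁ F := by
    intro F hF
    have hmono : Monotone (fun n : ℕ => F ∩ closedBall 0 n) := by
      intro i j hij
      exact inter_subset_inter_right _ (closedBall_subset_closedBall (by exact_mod_cast hij))
    have hun : (⋃ n : ℕ, F ∩ closedBall 0 n) = F := by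
      ext x
      simp only [mem_iUnion, mem_inter_iff, mem_closedBall, dist_zero_right]
      constructor
      · rintro ⟨n, hx, _⟩; exact hx
      · intro hx
        obtain ⟨n, hn⟩ := exists_nat_ge ‖x‖
        exact ⟨n, hx, hn⟩
    have h0 := tendsto_measure_iUnion_atTop (μ := Q₀) hmono
    have h1 := tendsto_measure_iUnion_atTop (μ := Q₁) hmono
    rw [hun] at h0 h1
    have heq : (fun n : ℕ => Q₀ (F ∩ closedBall 0 n)) = fun n : ℕ => Q₁ (F ∩ closedBall 0 n) := by
      funext n
      exact hcompact _ ((isCompact_closedBall 0 n).inter_left hF)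
    refine tendsto_nhds_unique ?_ h1
    have : (Q₀ ∘ fun n : ℕ => F ∩ closedBall 0 n) = fun n : ℕ => Q₁ (F ∩ closedBall 0 n) := by
      funext n; exact hcompact _ ((isCompact_closedBall 0 n).inter_left hF)
    rw [this] at h0
    exact h0
  refine MeasureTheory.ext_of_generate_finite {S | IsClosed S} ?_ isPiSystem_isClosed
    (fun F hF => hclosed F hF) (by simp)
  rw [BorelSpace.measurable_eq (α := EuclideanSpace ℝ (Fin m)), borel_eq_generateFrom_isClosed]


lemma sigmoid_integrable' {α : Type*} [MeasurableSpace α] (ν : Measure α) [IsFiniteMeasure ν]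
    (g : α → ℝ) (hg : Measurable g) : Integrable (fun x => sigmoid (g x)) ν := by
  apply Integrable.mono' (integrable_const 1)
  · exact (sigmoid_continuous.measurable.comp hg).aestronglyMeasurable
  · filter_upwards with x
    rw [Real.norm_eq_abs, abs_of_pos (sigmoid_pos _)]
    exact sigmoid_le_one _

lemma linsum_measurable {m : ℕ} (θ : Fin m → ℝ) :
    Measurable (fun z : Fin m → ℝ => ∑ i, θ i * z i) :=
  Finset.measurable_sum _ (fun i _ => (measurable_pi_apply i).const_mul _)

theorem measure_eq_of_sigmoidIPM_eq_zero {m : ℕ} (P₀ P₁ : Measure (Fin m → ℝ))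
    [IsProbabilityMeasure P₀] [IsProbabilityMeasure P₁]
    (h : sigmoidIPM P₀ P₁ = 0) : P₀ = P₁ := by
  -- Step 0: each sigmoid integral agrees
  have hsig : ∀ (θ : Fin m → ℝ) (b : ℝ),
      (∫ z, sigmoid ((∑ i, θ i * z i) + b) ∂P₀) = ∫ z, sigmoid ((∑ i, θ i * z i) + b) ∂P₁ := by
    intro θ b
    have hbd : ∀ (P : Measure (Fin m → ℝ)), IsProbabilityMeasure P →
        ∀ p : (Fin m → ℝ) × ℝ, |∫ z, sigmoid ((∑ i, p.1 i * z i) + p.2) ∂P| ≤ 1 := by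
      intro P hP p
      rw [← Real.norm_eq_abs]
      calc ‖∫ z, sigmoid ((∑ i, p.1 i * z i) + p.2) ∂P‖ ≤ 1 * (P univ).toReal := by
            apply norm_integral_le_of_norm_le_const
            filter_upwards with z
            rw [Real.norm_eq_abs, abs_of_pos (sigmoid_pos _)]
            exact sigmoid_le_one _
        _ = 1 := by simp
    have hbdd : BddAbove (range (fun p : (Fin m → ℝ) × ℝ =>
        |(∫ z, sigmoid ((∑ i, p.1 i * z i) + p.2) ∂P₀) -
          ∫ z, sigmoid ((∑ i, p.1 i * z i) + p.2) ∂P₁|)) := by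
      refine ⟨2, ?_⟩
      rintro _ ⟨p, rfl⟩
      calc |(∫ z, sigmoid ((∑ i, p.1 i * z i) + p.2) ∂P₀) -
          ∫ z, sigmoid ((∑ i, p.1 i * z i) + p.2) ∂P₁|
          ≤ |∫ z, sigmoid ((∑ i, p.1 i * z i) + p.2) ∂P₀| +
            |∫ z, sigmoid ((∑ i, p.1 i * z i) + p.2) ∂P₁| := abs_sub _ _
        _ ≤ 1 + 1 := add_le_add (hbd P₀ ‹_› p) (hbd P₁ ‹_› p)
        _ = 2 := by norm_num
    have hle := le_ciSup hbdd (θ, b)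
    rw [show (⨆ p : (Fin m → ℝ) × ℝ,
        |(∫ z, sigmoid ((∑ i, p.1 i * z i) + p.2) ∂P₀) -
          ∫ z, sigmoid ((∑ i, p.1 i * z i) + p.2) ∂P₁|) = sigmoidIPM P₀ P₁ from rfl, h] at hle
    have := abs_nonneg ((∫ z, sigmoid ((∑ i, θ i * z i) + b) ∂P₀) -
      ∫ z, sigmoid ((∑ i, θ i * z i) + b) ∂P₁)
    have h0 : |(∫ z, sigmoid ((∑ i, θ i * z i) + b) ∂P₀) -
        ∫ z, sigmoid ((∑ i, θ i * z i) + b) ∂P₁| = 0 := le_antisymm hle this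
    exact sub_eq_zero.mp (abs_eq_zero.mp h0)
  -- Step 1: 1D pushforwards agree
  have hmap : ∀ θ : Fin m → ℝ,
      Measure.map (fun z : Fin m → ℝ => ∑ i, θ i * z i) P₀
      = Measure.map (fun z : Fin m → ℝ => ∑ i, θ i * z i) P₁ := by
    intro θ
    have i0 : IsProbabilityMeasure (Measure.map (fun z : Fin m → ℝ => ∑ i, θ i * z i) P₀) :=
      Measure.isProbabilityMeasure_map (linsum_measurable θ).aemeasurable
    have i1 : IsProbabilityMeasure (Measure.map (fun z : Fin m → ℝ => ∑ i, θ i * z i) P₁) :=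
      Measure.isProbabilityMeasure_map (linsum_measurable θ).aemeasurable
    apply oneD_ext
    intro c b
    have hsm : AEStronglyMeasurable (fun x : ℝ => sigmoid (c * x + b))
        (Measure.map (fun z : Fin m → ℝ => ∑ i, θ i * z i) P₀) :=
      (sigmoid_continuous.comp (by continuity)).aestronglyMeasurable
    have hsm1 : AEStronglyMeasurable (fun x : ℝ => sigmoid (c * x + b))
        (Measure.map (fun z : Fin m → ℝ => ∑ i, θ i * z i) P₁) :=
      (sigmoid_continuous.comp (by continuity)).aestronglyMeasurable
    rw [integral_map (linsum_measurable θ).aemeasurable hsm,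
      integral_map (linsum_measurable θ).aemeasurable hsm1]
    have hrw : ∀ z : Fin m → ℝ, c * (∑ i, θ i * z i) + b
        = (∑ i, (c * θ i) * z i) + b := by
      intro z
      rw [Finset.mul_sum]
      simp [mul_assoc]
    simp_rw [hrw]
    exact hsig (fun i => c * θ i) b
  -- Step 2: move to EuclideanSpace and use Fourier
  set e := (MeasurableEquiv.toLp 2 (Fin m → ℝ)).symm with he
  have i0 : IsProbabilityMeasure (Measure.map e.symm P₀) :=
    Measure.isProbabilityMeasure_map e.symm.measurable.aemeasurable
  have i1 : IsProbabilityMeasure (Measure.map e.symm P₁) :=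
    Measure.isProbabilityMeasure_map e.symm.measurable.aemeasurable
  have hchar : ∀ x : EuclideanSpace ℝ (Fin m),
      VectorFourier.fourierIntegral 𝐞 (Measure.map e.symm P₀)
        (innerₗ (EuclideanSpace ℝ (Fin m))).flip (fun _ => (1:ℂ)) x
      = VectorFourier.fourierIntegral 𝐞 (Measure.map e.symm P₁)
        (innerₗ (EuclideanSpace ℝ (Fin m))).flip (fun _ => (1:ℂ)) x := by
    intro x
    have hcont : ∀ (Q : Measure (EuclideanSpace ℝ (Fin m))), AEStronglyMeasurable
        (fun v : EuclideanSpace ℝ (Fin m) =>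
          (𝐞 (-(innerₗ (EuclideanSpace ℝ (Fin m))).flip v x) • (1:ℂ))) Q := by
      intro Q
      apply Continuous.aestronglyMeasurable
      have : Continuous fun v : EuclideanSpace ℝ (Fin m) =>
          ((innerₗ (EuclideanSpace ℝ (Fin m))).flip v x) := by
        simp only [LinearMap.flip_apply]
        exact continuous_inner.comp (Continuous.prodMk continuous_const continuous_id)
      exact ((Real.continuous_fourierChar.comp this.neg).smul continuous_const)
    rw [VectorFourier.fourierIntegral, VectorFourier.fourierIntegral,
      integral_map e.symm.measurable.aemeasurable (hcont _),
      integral_map e.symm.measurable.aemeasurable (hcont _)]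
    have hinner : ∀ z : Fin m → ℝ,
        ((innerₗ (EuclideanSpace ℝ (Fin m))).flip (e.symm z) x) = ∑ i, x i * z i := by
      intro z
      simp [LinearMap.flip_apply, innerₗ_apply_apply, PiLp.inner_apply, RCLike.inner_apply,
        MeasurableEquiv.coe_toLp, conj_trivial, he, mul_comm]
    simp_rw [hinner]
    have hF : AEStronglyMeasurable (fun r : ℝ => (𝐞 (-r) • (1:ℂ)))
        (Measure.map (fun z : Fin m → ℝ => ∑ i, x i * z i) P₀) :=
      ((Real.continuous_fourierChar.comp continuous_neg).smul continuous_const).aestronglyMeasurable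
    have hF1 : AEStronglyMeasurable (fun r : ℝ => (𝐞 (-r) • (1:ℂ)))
        (Measure.map (fun z : Fin m → ℝ => ∑ i, x i * z i) P₁) :=
      ((Real.continuous_fourierChar.comp continuous_neg).smul continuous_const).aestronglyMeasurable
    rw [← integral_map (linsum_measurable x).aemeasurable hF,
      ← integral_map (linsum_measurable x).aemeasurable hF1, hmap (fun i => x i)]
  have hQ : Measure.map e.symm P₀ = Measure.map e.symm P₁ :=
    measure_eq_of_schwartz _ _ (schwartz_integral_eq _ _ hchar)
  calc P₀ = Measure.map e (Measure.map e.symm P₀) := by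
        rw [Measure.map_map e.measurable e.symm.measurable]
        simp
    _ = Measure.map e (Measure.map e.symm P₁) := by rw [hQ]
    _ = P₁ := by
        rw [Measure.map_map e.measurable e.symm.measurable]
        simp

end Aux

/-- if the sigmoid IPM of two Borel probability measures on `ℝ^m` is zero,
then every bounded measurable function has equal integrals under the two measures; in
particular, for any prediction model `f` and any `φ : ℝ → ℝ` with `φ ∘ f` bounded and
measurable, the `φ`-fairness `|∫ φ(f z) dP₀ - ∫ φ(f z) dP₁|` equals `0`. -/
theorem integral_eq_of_sigmoidIPM_eq_zero {m : ℕ} (P₀ P₁ : Measure (Fin m → ℝ))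
    [IsProbabilityMeasure P₀] [IsProbabilityMeasure P₁]
    (h : sigmoidIPM P₀ P₁ = 0) :
    (∀ g : (Fin m → ℝ) → ℝ, Measurable g → (∃ C : ℝ, ∀ z, |g z| ≤ C) →
      (∫ z, g z ∂P₀) = ∫ z, g z ∂P₁) ∧
    (∀ (f : (Fin m → ℝ) → ℝ) (φ : ℝ → ℝ), Measurable (φ ∘ f) →
      (∃ C : ℝ, ∀ z, |φ (f z)| ≤ C) →
      |(∫ z, φ (f z) ∂P₀) - ∫ z, φ (f z) ∂P₁| = 0) := by
  have hP := measure_eq_of_sigmoidIPM_eq_zero P₀ P₁ h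
  constructor
  · intro g _ _
    rw [hP]
  · intro f φ _ _
    rw [hP]
    simp
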